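/- Fix w* > 0 and let R(w) = (σ(w) - σ(w*))/(w - w*) for w ≠ w*, where σ is the sigmoid. Then: (a) R is strictly increasing on (-∞, -w*); (b) for every w with -w* < w < w*, R(w) > σ'(w*); (c) for every w > w*, R(w) < σ'(w*); (d) for every w > w* > 0, σ'(w) < σ'(2w* - w). -/

import Mathlib

noncomputable def sigmoid (w : ℝ) : ℝ := 1 / (1 + Real.exp (-w))

open Real hiding sigmoid deriv_sigmoid

lemma one_add_exp_ne (x : ℝ) : 1 + Real.exp x ≠ 0 := by positivity

lemma sigmoid_hasDerivAt (w : ℝ) :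
    HasDerivAt sigmoid (exp w / (1 + exp w) ^ 2) w := by
  have h0 : HasDerivAt (fun w : ℝ => 1 + exp (-w)) (-exp (-w)) w := by
    have h := (Real.hasDerivAt_exp (-w)).comp w (hasDerivAt_neg w)
    simpa [mul_comm] using h.const_add 1
  have h1 : HasDerivAt (fun w : ℝ => 1 / (1 + exp (-w)))
      ((0 * (1 + exp (-w)) - 1 * (-exp (-w))) / (1 + exp (-w)) ^ 2) w :=
    (hasDerivAt_const w 1).div h0 (one_add_exp_ne _)
  have he : (0 * (1 + exp (-w)) - 1 * (-exp (-w))) / (1 + exp (-w)) ^ 2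
      = exp w / (1 + exp w) ^ 2 := by
    rw [Real.exp_neg]
    have hx := Real.exp_ne_zero w
    field_simp
    ring
  rw [he] at h1
  exact h1

lemma deriv_sigmoid (w : ℝ) : deriv sigmoid w = exp w / (1 + exp w) ^ 2 :=
  (sigmoid_hasDerivAt w).deriv

lemma sigmoid_continuous : Continuous sigmoid :=
  continuous_iff_continuousAt.2 fun w => (sigmoid_hasDerivAt w).continuousAt

lemma dsig_even (w : ℝ) : deriv sigmoid (-w) = deriv sigmoid w := by
  rw [deriv_sigmoid, deriv_sigmoid, Real.exp_neg]
  have hx := Real.exp_ne_zero w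
  have h1 := one_add_exp_ne w
  field_simp
  ring

lemma dsig_anti {a b : ℝ} (ha : 0 ≤ a) (hab : a < b) :
    deriv sigmoid b < deriv sigmoid a := by
  rw [deriv_sigmoid, deriv_sigmoid]
  have hx : (1:ℝ) ≤ exp a := Real.one_le_exp ha
  have hxy : exp a < exp b := Real.exp_lt_exp.2 hab
  have h1 : (0:ℝ) < (1 + exp b) ^ 2 := by positivity
  have h2 : (0:ℝ) < (1 + exp a) ^ 2 := by positivity
  rw [div_lt_div_iff₀ h1 h2]
  have h3 : 1 < exp a * exp b := by nlinarith
  nlinarith [mul_pos (sub_pos.2 hxy) (sub_pos.2 h3)]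

lemma dsig_key {u v : ℝ} (h : |u| < v) : deriv sigmoid v < deriv sigmoid u := by
  have h1 : deriv sigmoid u = deriv sigmoid |u| := by
    rcases abs_cases u with ⟨h2, _⟩ | ⟨h2, _⟩
    · rw [h2]
    · rw [h2, dsig_even]
  rw [h1]
  exact dsig_anti (abs_nonneg u) h

-- derivative of the derivative of sigmoid (as explicit formula)
lemma D_hasDerivAt (x : ℝ) :
    HasDerivAt (fun w : ℝ => exp w / (1 + exp w) ^ 2)
      (exp x * (1 - exp x) / (1 + exp x) ^ 3) x := by
  have hden : HasDerivAt (fun w : ℝ => (1 + exp w) ^ 2)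
      (2 * (1 + exp x) ^ 1 * exp x) x := by
    have h0 : HasDerivAt (fun w : ℝ => 1 + exp w) (exp x) x := by
      simpa using (Real.hasDerivAt_exp x).const_add 1
    simpa using h0.fun_pow 2
  have h1 : HasDerivAt (fun w : ℝ => exp w / (1 + exp w) ^ 2)
      ((exp x * (1 + exp x) ^ 2 - exp x * (2 * (1 + exp x) ^ 1 * exp x)) /
        ((1 + exp x) ^ 2) ^ 2) x :=
    (Real.hasDerivAt_exp x).div hden (by positivity)
  have he : (exp x * (1 + exp x) ^ 2 - exp x * (2 * (1 + exp x) ^ 1 * exp x)) /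
        ((1 + exp x) ^ 2) ^ 2 = exp x * (1 - exp x) / (1 + exp x) ^ 3 := by
    have h2 := one_add_exp_ne x
    field_simp
    ring
  rw [he] at h1
  exact h1

theorem secant_slope_properties
    (wstar : ℝ) (hwstar : 0 < wstar)
    (R : ℝ → ℝ)
    (hR : ∀ w, w ≠ wstar → R w = (sigmoid w - sigmoid wstar) / (w - wstar)) :
    StrictMonoOn R (Set.Iio (-wstar)) ∧
    (∀ w, -wstar < w → w < wstar → deriv sigmoid wstar < R w) ∧
    (∀ w, wstar < w → R w < deriv sigmoid wstar) ∧
    (∀ w, wstar < w → deriv sigmoid w < deriv sigmoid (2 * wstar - w)) := by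
  have hmvt : ∀ x : ℝ, HasDerivAt sigmoid (deriv sigmoid x) x := fun x =>
    (sigmoid_hasDerivAt x).differentiableAt.hasDerivAt
  refine ⟨?_, ?_, ?_, ?_⟩
  · -- part (a)
    set g : ℝ → ℝ := fun w =>
      exp w / (1 + exp w) ^ 2 * (w - wstar) - (sigmoid w - sigmoid wstar) with hgdef
    have hg' : ∀ x : ℝ, HasDerivAt g
        (exp x * (1 - exp x) / (1 + exp x) ^ 3 * (x - wstar)) x := by
      intro x
      have h1 : HasDerivAt g
          (exp x * (1 - exp x) / (1 + exp x) ^ 3 * (x - wstar)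
            + exp x / (1 + exp x) ^ 2 * 1 - exp x / (1 + exp x) ^ 2) x :=
        ((D_hasDerivAt x).mul ((hasDerivAt_id x).sub_const wstar)).sub
          ((sigmoid_hasDerivAt x).sub_const (sigmoid wstar))
      convert h1 using 1
      ring
    have hganti : AntitoneOn g (Set.Iic (-wstar)) := by
      apply antitoneOn_of_deriv_nonpos (convex_Iic _)
      · exact Continuous.continuousOn
          (continuous_iff_continuousAt.2 fun x => (hg' x).continuousAt)
      · intro x _
        exact (hg' x).differentiableAt.differentiableWithinAt
      · intro x hx
        rw [interior_Iic] at hx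
        rw [(hg' x).deriv]
        have hx0 : x < 0 := lt_trans hx (by linarith)
        have h1 : exp x < 1 := exp_lt_one_iff.2 hx0
        have h2 : (0:ℝ) < exp x * (1 - exp x) / (1 + exp x) ^ 3 :=
          div_pos (mul_pos (Real.exp_pos x) (by linarith)) (by positivity)
        nlinarith [hx.trans_le (le_refl (-wstar))]
    have hgpos0 : 0 < g (-wstar) := by
      set x := exp wstar with hxdef
      have hx0 : (0:ℝ) < x := Real.exp_pos wstar
      have hx1 : (1:ℝ) < x := by
        rw [hxdef, ← Real.exp_zero]; exact Real.exp_lt_exp.2 hwstar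
      have hs : wstar < (x - x⁻¹) / 2 := by
        have h := (Real.self_lt_sinh_iff).2 hwstar
        rwa [Real.sinh_eq, Real.exp_neg] at h
      have key : 2 * wstar * x < x ^ 2 - 1 := by
        have hxx : x * x⁻¹ = 1 := mul_inv_cancel₀ hx0.ne'
        nlinarith
      have heq : g (-wstar) = (x ^ 2 - 1 - 2 * wstar * x) / (1 + x) ^ 2 := by
        simp only [hgdef, sigmoid]
        rw [neg_neg, Real.exp_neg]
        have h1 : (1:ℝ) + x ≠ 0 := by positivity
        field_simp
        ring
      rw [heq]
      apply div_pos (by linarith) (by positivity)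
    have hgpos : ∀ w ∈ Set.Iio (-wstar), 0 < g w := by
      intro w hw
      have : g (-wstar) ≤ g w :=
        hganti (Set.mem_Iic.2 (le_of_lt hw)) (Set.mem_Iic.2 le_rfl) (le_of_lt hw)
      linarith
    set F : ℝ → ℝ := fun w => (sigmoid w - sigmoid wstar) / (w - wstar) with hFdef
    have hne : ∀ w ∈ Set.Iio (-wstar), w - wstar ≠ 0 := by
      intro w hw
      have hw' : w < -wstar := hw
      intro h
      have := sub_eq_zero.1 h
      linarith
    have hF' : ∀ w ∈ Set.Iio (-wstar), HasDerivAt F (g w / (w - wstar) ^ 2) w := by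
      intro w hw
      have h1 : HasDerivAt F
          ((exp w / (1 + exp w) ^ 2 * (w - wstar) - (sigmoid w - sigmoid wstar) * 1)
            / (w - wstar) ^ 2) w :=
        ((sigmoid_hasDerivAt w).sub_const (sigmoid wstar)).div
          ((hasDerivAt_id w).sub_const wstar) (hne w hw)
      convert h1 using 2
      simp only [hgdef, mul_one]
    have hFmono : StrictMonoOn F (Set.Iio (-wstar)) := by
      apply strictMonoOn_of_deriv_pos (convex_Iio _)
      · intro w hw
        exact (hF' w hw).continuousAt.continuousWithinAt
      · intro w hw
        rw [interior_Iio] at hw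
        rw [(hF' w hw).deriv]
        have := hgpos w hw
        have h2 : (0:ℝ) < (w - wstar) ^ 2 := by
          have := hne w hw
          positivity
        positivity
    intro a ha b hb hab
    have hane : a ≠ wstar := by
      have : a < -wstar := ha
      intro h; rw [h] at this; linarith
    have hbne : b ≠ wstar := by
      have : b < -wstar := hb
      intro h; rw [h] at this; linarith
    rw [hR a hane, hR b hbne]
    exact hFmono ha hb hab
  · -- part (b)
    intro w h1 h2
    obtain ⟨c, hc, hslope⟩ := exists_hasDerivAt_eq_slope sigmoid (deriv sigmoid) h2
      sigmoid_continuous.continuousOn (fun x _ => hmvt x)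
    have hRw : R w = deriv sigmoid c := by
      rw [hR w (ne_of_lt h2), hslope]
      rw [← neg_sub (sigmoid wstar), ← neg_sub wstar, neg_div_neg_eq]
    rw [hRw]
    exact dsig_key (abs_lt.2 ⟨by linarith [hc.1], hc.2⟩)
  · -- part (c)
    intro w h1
    obtain ⟨c, hc, hslope⟩ := exists_hasDerivAt_eq_slope sigmoid (deriv sigmoid) h1
      sigmoid_continuous.continuousOn (fun x _ => hmvt x)
    have hRw : R w = deriv sigmoid c := by
      rw [hR w (ne_of_gt h1), hslope]
    rw [hRw]
    have : |wstar| < c := by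
      rw [abs_of_pos hwstar]; exact hc.1
    exact dsig_key this
  · -- part (d)
    intro w h1
    exact dsig_key (abs_lt.2 ⟨by linarith, by linarith⟩)
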